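/- Fix k ≥ 1. If the path graph P_n admits a burning sequence with exactly k sources whose burning is a burning homomorphism, then n ≤ k² + k + 1; moreover, the path graph P_{k²+k+1} admits such a burning sequence with exactly k sources. -/

import Mathlib

open SimpleGraph

/-- The path graph `P_n` with vertices `1, …, n` (represented by `Fin n`,
vertex `i+1` corresponds to index `i`) and edges `{i, i+1}`. -/
def pathG (n : ℕ) : SimpleGraph (Fin n) where
  Adj v w := v.val + 1 = w.val ∨ w.val + 1 = v.val
  symm := ⟨by intro v w h; tauto⟩
  loopless := ⟨by intro v h; rcases h with h | h <;> omega⟩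

/-- `(s 0, …, s (k-1))` is a burning sequence of `G` (written `1`-based in the paper:
`d(v_i, v_j) ≥ j - i + 1` for `i < j`, and every vertex `v` satisfies
`d(v_i, v) ≤ k + 1 - i` for some `i`). Distances are `ℕ∞`-valued. -/
def IsBurningSeq {V : Type*} (G : SimpleGraph V) {k : ℕ} (s : Fin k → V) : Prop :=
  1 ≤ k ∧
  (∀ i j : Fin k, i < j → ((j.val - i.val + 1 : ℕ) : ℕ∞) ≤ G.edist (s i) (s j)) ∧
  (∀ v : V, ∃ i : Fin k, G.edist (s i) v ≤ ((k - i.val : ℕ) : ℕ∞))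

/-- The burning time function `λ(v) = min_{1 ≤ i ≤ k} (i + d(v_i, v))`. -/
noncomputable def burnTime {V : Type*} (G : SimpleGraph V) {k : ℕ} (s : Fin k → V)
    (v : V) : ℕ :=
  (⨅ i : Fin k, ((i.val + 1 : ℕ) : ℕ∞) + G.edist (s i) v).toNat

/-- The end time `T = max_{v ∈ V} λ(v)` of a burning. -/
noncomputable def endTime {V : Type*} [Fintype V] (G : SimpleGraph V) {k : ℕ}
    (s : Fin k → V) : ℕ :=
  Finset.univ.sup fun v => burnTime G s v


def dAbs (a b : ℕ) : ℕ := (a - b) + (b - a)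

lemma pathG_adj_edist {n : ℕ} {u v : Fin n} (h : (pathG n).Adj u v) :
    (pathG n).edist u v ≤ 1 := by
  simpa using edist_le (SimpleGraph.Walk.cons h SimpleGraph.Walk.nil)

lemma pathG_edist_le {n : ℕ} (d : ℕ) : ∀ (u v : Fin n), u.val + d = v.val →
    (pathG n).edist u v ≤ (d : ℕ∞) := by
  induction d with
  | zero => intro u v h; have : u = v := Fin.ext (by omega); simp [this]
  | succ d ih =>
    intro u v h
    have hlt : u.val + 1 < n := by omega
    set u' : Fin n := ⟨u.val + 1, by omega⟩ with hu'
    have hadj : (pathG n).Adj u u' := Or.inl rfl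
    calc (pathG n).edist u v ≤ (pathG n).edist u u' + (pathG n).edist u' v :=
          SimpleGraph.edist_triangle
      _ ≤ 1 + (d : ℕ∞) := add_le_add (pathG_adj_edist hadj) (ih u' v (by simp [hu']; omega))
      _ = ((d+1 : ℕ) : ℕ∞) := by push_cast; ring

lemma pathG_walk_len {n : ℕ} {u v : Fin n} (w : (pathG n).Walk u v) :
    (u.val - v.val) + (v.val - u.val) ≤ w.length := by
  induction w with
  | nil => simp
  | @cons a b c h p ih =>
    have : a.val + 1 = b.val ∨ b.val + 1 = a.val := h
    simp only [SimpleGraph.Walk.length_cons]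
    omega

lemma pathG_edist_raw {n : ℕ} (u v : Fin n) :
    (pathG n).edist u v = (((u.val - v.val) + (v.val - u.val) : ℕ) : ℕ∞) := by
  apply le_antisymm
  · rcases le_total u.val v.val with h | h
    · have := pathG_edist_le (v.val - u.val) u v (by omega)
      convert this using 2; rfl; omega
    · have := pathG_edist_le (u.val - v.val) v u (by omega)
      rw [SimpleGraph.edist_comm]
      convert this using 2; rfl; omega
  · rw [SimpleGraph.edist_eq_sInf]
    apply le_sInf
    rintro x ⟨w, rfl⟩
    show ((_ : ℕ) : ℕ∞) ≤ ((w.length:ℕ):ℕ∞); exact_mod_cast pathG_walk_len w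

lemma pathG_edist {n : ℕ} (u v : Fin n) :
    (pathG n).edist u v = ((dAbs u.val v.val : ℕ) : ℕ∞) := pathG_edist_raw u v

lemma burnTime_eq {n k : ℕ} (hk : 1 ≤ k) (s : Fin k → Fin n) (v : Fin n) :
    burnTime (pathG n) s v =
      Finset.univ.inf' ⟨⟨0, hk⟩, Finset.mem_univ _⟩
        (fun i => i.val + 1 + dAbs (s i).val v.val) := by
  set f : Fin k → ℕ := fun i => i.val + 1 + dAbs (s i).val v.val with hf
  have hne : (Finset.univ : Finset (Fin k)).Nonempty := ⟨⟨0, hk⟩, Finset.mem_univ _⟩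
  have h1 : (⨅ i : Fin k, ((i.val + 1 : ℕ) : ℕ∞) + (pathG n).edist (s i) v)
      = ((Finset.univ.inf' hne f : ℕ) : ℕ∞) := by
    apply le_antisymm
    · obtain ⟨i, _, hieq⟩ := Finset.exists_mem_eq_inf' hne f
      rw [hieq]
      refine le_trans (iInf_le _ i) ?_
      rw [pathG_edist]
      simp only [hf, dAbs]
      push_cast
      ring_nf
      exact le_refl _
    · apply le_iInf
      intro i
      rw [pathG_edist]
      have := Finset.inf'_le f (Finset.mem_univ i)
      exact_mod_cast this
  rw [burnTime, h1, ENat.toNat_coe]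

lemma sum_bound (k : ℕ) :
    (∑ i : Fin k, (k - i.val)) * 2 = k * (k+1) := by
  rw [Fin.sum_univ_eq_sum_range (fun j => k - j)]
  have h : ∑ j ∈ Finset.range k, (k - (k - 1 - j)) = ∑ j ∈ Finset.range k, (k - j) :=
    Finset.sum_range_reflect (fun j => k - j) k
  have h2 : ∑ j ∈ Finset.range k, (k - (k-1-j)) = ∑ j ∈ Finset.range k, (j+1) :=
    Finset.sum_congr rfl (fun j hj => by rw [Finset.mem_range] at hj; omega)
  have h3 : ∑ j ∈ Finset.range k, ((k - j) + (j+1)) = ∑ j ∈ Finset.range k, (k+1) :=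
    Finset.sum_congr rfl (fun j hj => by rw [Finset.mem_range] at hj; omega)
  rw [Finset.sum_add_distrib] at h3
  rw [Finset.sum_const, Finset.card_range, smul_eq_mul] at h3
  omega

lemma descents_bound (n k : ℕ) (hk : 1 ≤ k) (L : ℕ → ℕ) (p : Fin k → ℕ)
    (hmin : ∀ v, v < n → (v = 0 ∨ L v < L (v-1)) → (v+1 = n ∨ L v < L (v+1)) →
      ∃ i, p i = v ∧ L v = i.val + 1)
    (hstep : ∀ v, v + 1 < n → L v = L (v+1) + 1 ∨ L (v+1) = L v + 1)
    (hub : ∀ v, v < n → L v ≤ k + 1) :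
    ((Finset.range n).filter (fun v => v + 1 < n ∧ L v = L (v+1) + 1)).card * 2
      ≤ k * (k+1) := by
  classical
  set Dset := (Finset.range n).filter (fun v => v + 1 < n ∧ L v = L (v+1) + 1) with hD
  have claim : ∀ v, ∃ iw : Fin k × ℕ, v ∈ Dset →
      p iw.1 = iw.2 ∧ iw.1.val + 2 ≤ L v ∧ v < iw.2 ∧
      (∀ u, v < u → u < n → L u = L v → iw.2 < u) := by
    intro v
    by_cases hv : v ∈ Dset
    swap
    · exact ⟨(⟨0, hk⟩, 0), fun h => absurd h hv⟩
    have hmem := Finset.mem_filter.mp hv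
    have hvn : v < n := Finset.mem_range.mp hmem.1
    have hv2 : v + 1 < n := hmem.2.1
    have hv3 : L v = L (v+1) + 1 := hmem.2.2
    -- r : least r > v with r = n or L r = L v
    have hPex : ∃ r, v < r ∧ (r = n ∨ (r < n ∧ L r = L v)) := ⟨n, hvn, Or.inl rfl⟩
    set r := Nat.find hPex with hrdef
    have hrspec : v < r ∧ (r = n ∨ (r < n ∧ L r = L v)) := Nat.find_spec hPex
    obtain ⟨hr1, hr2⟩ := hrspec
    have hrn : r ≤ n := Nat.find_min' hPex ⟨hvn, Or.inl rfl⟩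
    have hvr : v + 1 < r := by
      rcases Nat.lt_or_ge (v+1) r with h | h
      · exact h
      · exfalso
        have hre : r = v + 1 := by omega
        rw [hre] at hr2
        omega
    -- least element of interval attaining min
    have hne : (Finset.Ico (v+1) r).Nonempty := ⟨v+1, Finset.mem_Ico.mpr ⟨le_refl _, hvr⟩⟩
    set m := (Finset.Ico (v+1) r).inf' hne L with hmdef
    obtain ⟨w0, hw0mem, hw0eq⟩ := Finset.exists_mem_eq_inf' hne L
    have hQex : ∃ w, v + 1 ≤ w ∧ w < r ∧ L w = m := by
      rw [Finset.mem_Ico] at hw0mem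
      exact ⟨w0, hw0mem.1, hw0mem.2, hw0eq.symm⟩
    set w := Nat.find hQex with hwdef
    have hwspec : v + 1 ≤ w ∧ w < r ∧ L w = m := Nat.find_spec hQex
    obtain ⟨hw1, hw2, hwm⟩ := hwspec
    have hmle : ∀ u, v + 1 ≤ u → u < r → m ≤ L u := fun u h1 h2 =>
      Finset.inf'_le L (Finset.mem_Ico.mpr ⟨h1, h2⟩)
    have hleast : ∀ u, u < w → v + 1 ≤ u → u < r → L u ≠ m := by
      intro u hu h1 h2 heq
      exact Nat.find_min hQex hu ⟨h1, h2, heq⟩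
    have hwn : w < n := lt_of_lt_of_le hw2 hrn
    have hmt : m ≤ L (v+1) := hmle (v+1) (le_refl _) hvr
    have hLw : L w + 1 ≤ L v := by omega
    -- w is a local min
    have hleft : w = 0 ∨ L w < L (w - 1) := by
      right
      rcases Nat.lt_or_ge v (w-1) with h | h
      · have h1 : v + 1 ≤ w - 1 := by omega
        have h2 : w - 1 < r := by omega
        have h3 := hmle (w-1) h1 h2
        have h4 := hleast (w-1) (by omega) h1 h2
        omega
      · have hwv : w - 1 = v := by omega
        rw [hwv]
        omega
    have hright : w + 1 = n ∨ L w < L (w + 1) := by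
      rcases Nat.lt_or_ge (w+1) r with h | h
      · right
        have h1 := hmle (w+1) (by omega) h
        rcases hstep w (by omega) with h2 | h2 <;> omega
      · -- w + 1 = r
        have hwr : w + 1 = r := by omega
        rcases hr2 with h2 | h2
        · left; omega
        · right
          have : L (w+1) = L v := by rw [hwr]; exact h2.2
          omega
    obtain ⟨i, hip, hiL⟩ := hmin w hwn hleft hright
    have hiv : i.val + 2 ≤ L v := by omega
    have hvw : v < w := by omega
    refine ⟨(i, w), fun _ => ⟨hip, hiv, hvw, ?_⟩⟩
    intro u hu1 hu2 hu3
    have hru : r ≤ u := Nat.find_min' hPex ⟨hu1, Or.inr ⟨hu2, hu3⟩⟩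
    omega
  choose g hg using claim
  set S : Finset (Fin k × ℕ) := Finset.univ.biUnion
    (fun i : Fin k => ({i} : Finset (Fin k)) ×ˢ Finset.Icc (i.val+2) (k+1)) with hS
  have hmaps : ∀ v ∈ Dset, ((g v).1, L v) ∈ S := by
    intro v hv
    obtain ⟨h1, h2, h3, h4⟩ := hg v hv
    have hvn : v < n := Finset.mem_range.mp (Finset.mem_filter.mp hv).1
    rw [hS, Finset.mem_biUnion]
    exact ⟨(g v).1, Finset.mem_univ _, Finset.mem_product.mpr
      ⟨Finset.mem_singleton_self _, Finset.mem_Icc.mpr ⟨h2, hub v hvn⟩⟩⟩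
  have hinj : Set.InjOn (fun v => ((g v).1, L v)) Dset := by
    intro v1 hv1 v2 hv2 heq
    simp only [Prod.mk.injEq] at heq
    obtain ⟨he1, he2⟩ := heq
    by_contra hne
    obtain ⟨p1, q1, r1, s1⟩ := hg v1 hv1
    obtain ⟨p2, q2, r2, s2⟩ := hg v2 hv2
    have hww : (g v1).2 = (g v2).2 := by rw [← p1, ← p2, he1]
    have hv1n : v1 < n := Finset.mem_range.mp (Finset.mem_filter.mp hv1).1
    have hv2n : v2 < n := Finset.mem_range.mp (Finset.mem_filter.mp hv2).1
    rcases lt_trichotomy v1 v2 with h | h | h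
    · have := s1 v2 h hv2n he2.symm
      omega
    · exact hne h
    · have := s2 v1 h hv1n he2
      omega
  have hcard : Dset.card ≤ S.card :=
    Finset.card_le_card_of_injOn _ hmaps hinj
  have hScard : S.card = ∑ i : Fin k, (k - i.val) := by
    rw [hS, Finset.card_biUnion]
    · apply Finset.sum_congr rfl
      intro i _
      rw [Finset.card_product, Finset.card_singleton, Nat.card_Icc]
      omega
    · intro i _ j _ hij
      simp only [Function.onFun]
      rw [Finset.disjoint_left]
      intro a ha hb
      rw [Finset.mem_product, Finset.mem_singleton] at ha hb
      exact hij (ha.1 ▸ hb.1 ▸ rfl)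
  have := sum_bound k
  omega

lemma comb_bound (n k : ℕ) (hk : 1 ≤ k) (L : ℕ → ℕ) (p : Fin k → ℕ)
    (hmin : ∀ v, v < n → (v = 0 ∨ L v < L (v-1)) → (v+1 = n ∨ L v < L (v+1)) →
      ∃ i, p i = v ∧ L v = i.val + 1)
    (hstep : ∀ v, v + 1 < n → L v = L (v+1) + 1 ∨ L (v+1) = L v + 1)
    (hub : ∀ v, v < n → L v ≤ k + 1) :
    n ≤ k ^ 2 + k + 1 := by
  classical
  set L' : ℕ → ℕ := fun v => L (n - 1 - v) with hL'
  set p' : Fin k → ℕ := fun i => n - 1 - p i with hp'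
  have hstep' : ∀ v, v + 1 < n → L' v = L' (v+1) + 1 ∨ L' (v+1) = L' v + 1 := by
    intro v hv
    have h1 : L' v = L (n - 1 - v) := rfl
    have h2 : L' (v+1) = L (n - 2 - v) := by simp only [hL']; congr 1 <;> omega
    have h3 : (n - 2 - v) + 1 = n - 1 - v := by omega
    have := hstep (n - 2 - v) (by omega)
    rw [h3] at this
    rw [h1, h2]
    tauto
  have hub' : ∀ v, v < n → L' v ≤ k + 1 := fun v hv => hub _ (by omega)
  have hmin' : ∀ v, v < n → (v = 0 ∨ L' v < L' (v-1)) → (v+1 = n ∨ L' v < L' (v+1)) →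
      ∃ i, p' i = v ∧ L' v = i.val + 1 := by
    intro v hv h1 h2
    set u := n - 1 - v with hu
    have hun : u < n := by omega
    have hleft : u = 0 ∨ L u < L (u - 1) := by
      rcases eq_or_ne (v+1) n with hvn1 | hvn1
      · left; omega
      · rcases h2 with h | h
        · exact absurd h hvn1
        · right
          have e1 : L' v = L u := rfl
          have e2 : L' (v+1) = L (u - 1) := by simp only [hL']; congr 1 <;> omega
          rw [e1, e2] at h; exact h
    have hright : u + 1 = n ∨ L u < L (u + 1) := by
      rcases h1 with h | h
      · left; omega
      · rcases Nat.eq_zero_or_pos v with hv0 | hv0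
        · exfalso; rw [hv0] at h; simp at h
        · right
          have e1 : L' v = L u := rfl
          have e2 : L' (v-1) = L (u + 1) := by simp only [hL']; congr 1 <;> omega
          rw [e1, e2] at h; exact h
    obtain ⟨i, hi1, hi2⟩ := hmin u hun hleft hright
    refine ⟨i, ?_, ?_⟩
    · simp only [hp', hi1, hu]; omega
    · exact hi2
  have hD := descents_bound n k hk L p hmin hstep hub
  have hD' := descents_bound n k hk L' p' hmin' hstep' hub'
  set Dset := (Finset.range n).filter (fun v => v + 1 < n ∧ L v = L (v+1) + 1) with hDs
  set Aset := (Finset.range n).filter (fun v => v + 1 < n ∧ L (v+1) = L v + 1) with hAs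
  set D'set := (Finset.range n).filter (fun v => v + 1 < n ∧ L' v = L' (v+1) + 1) with hD's
  have hAcard : Aset.card = D'set.card := by
    apply Finset.card_nbij' (fun v => n - 2 - v) (fun v => n - 2 - v)
    · intro a ha
      rw [hAs, Finset.mem_coe, Finset.mem_filter, Finset.mem_range] at ha
      obtain ⟨h1, h2, h3⟩ := ha
      rw [hD's, Finset.mem_coe, Finset.mem_filter, Finset.mem_range]
      have e1 : L' (n - 2 - a) = L (a + 1) := by simp only [hL']; congr 1 <;> omega
      have e2 : L' (n - 2 - a + 1) = L a := by simp only [hL']; congr 1 <;> omega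
      beta_reduce
      exact ⟨by omega, by omega, by rw [e1, e2]; omega⟩
    · intro a ha
      rw [hD's, Finset.mem_coe, Finset.mem_filter, Finset.mem_range] at ha
      obtain ⟨h1, h2, h3⟩ := ha
      rw [hAs, Finset.mem_coe, Finset.mem_filter, Finset.mem_range]
      have e1 : L' a = L (n - 1 - a) := rfl
      have e2 : L' (a + 1) = L (n - 2 - a) := by simp only [hL']; congr 1 <;> omega
      rw [e1, e2] at h3
      have e3 : n - 2 - a + 1 = n - 1 - a := by omega
      beta_reduce
      refine ⟨by omega, by omega, by rw [e3]; omega⟩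
    · intro a ha
      rw [hAs, Finset.mem_coe, Finset.mem_filter, Finset.mem_range] at ha
      beta_reduce
      omega
    · intro a ha
      rw [hD's, Finset.mem_coe, Finset.mem_filter, Finset.mem_range] at ha
      beta_reduce
      omega
  have hsub : Finset.range (n - 1) ⊆ Dset ∪ Aset := by
    intro v hv
    rw [Finset.mem_range] at hv
    rcases hstep v (by omega) with h | h
    · exact Finset.mem_union_left _ (Finset.mem_filter.mpr ⟨Finset.mem_range.mpr (by omega), by omega, h⟩)
    · exact Finset.mem_union_right _ (Finset.mem_filter.mpr ⟨Finset.mem_range.mpr (by omega), by omega, h⟩)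
  have hcard : n - 1 ≤ Dset.card + Aset.card := by
    calc n - 1 = (Finset.range (n-1)).card := (Finset.card_range _).symm
      _ ≤ (Dset ∪ Aset).card := Finset.card_le_card hsub
      _ ≤ Dset.card + Aset.card := Finset.card_union_le _ _
  have hkk : k * (k + 1) = k ^ 2 + k := by ring
  omega

lemma part1 (k n : ℕ) (hk : 1 ≤ k) (s : Fin k → Fin n)
    (hb : IsBurningSeq (pathG n) s)
    (hhom : ∀ v w : Fin n, (pathG n).Adj v w →
      burnTime (pathG n) s v ≠ burnTime (pathG n) s w) :
    n ≤ k ^ 2 + k + 1 := by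
  classical
  obtain ⟨-, ha, hc⟩ := hb
  set p : Fin k → ℕ := fun i => (s i).val with hp
  have hpn : ∀ i, p i < n := fun i => (s i).isLt
  set Lf : ℕ → ℕ := fun v => if h : v < n then burnTime (pathG n) s ⟨v, h⟩ else 0 with hLf
  have hne : (Finset.univ : Finset (Fin k)).Nonempty := ⟨⟨0, hk⟩, Finset.mem_univ _⟩
  have hLeq : ∀ v (h : v < n),
      Lf v = Finset.univ.inf' hne (fun i => i.val + 1 + dAbs (p i) v) := by
    intro v h
    simp only [hLf, dif_pos h, burnTime_eq hk s ⟨v, h⟩]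
    rfl
  have hLle : ∀ v (h : v < n) (i : Fin k), Lf v ≤ i.val + 1 + dAbs (p i) v := by
    intro v h i
    rw [hLeq v h]
    exact Finset.inf'_le _ (Finset.mem_univ i)
  have hLmem : ∀ v (h : v < n), ∃ i : Fin k, Lf v = i.val + 1 + dAbs (p i) v := by
    intro v h
    obtain ⟨i, _, hi⟩ := Finset.exists_mem_eq_inf' hne (fun i => i.val + 1 + dAbs (p i) v)
    exact ⟨i, by rw [hLeq v h, hi]⟩
  -- distances between sources
  have ha' : ∀ i j : Fin k, i < j → j.val - i.val + 1 ≤ dAbs (p i) (p j) := by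
    intro i j hij
    have := ha i j hij
    rw [pathG_edist] at this
    exact_mod_cast this
  -- upper bound
  have hub : ∀ v, v < n → Lf v ≤ k + 1 := by
    intro v h
    obtain ⟨i, hi⟩ := hc ⟨v, h⟩
    rw [pathG_edist] at hi
    have hile : dAbs (p i) v ≤ k - i.val := by exact_mod_cast hi
    have := hLle v h i
    have := i.isLt
    omega
  -- steps
  have hstep : ∀ v, v + 1 < n → Lf v = Lf (v+1) + 1 ∨ Lf (v+1) = Lf v + 1 := by
    intro v h
    have h1 : v < n := by omega
    obtain ⟨i, hi⟩ := hLmem v h1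
    obtain ⟨j, hj⟩ := hLmem (v+1) h
    have l1 : Lf (v+1) ≤ Lf v + 1 := by
      have := hLle (v+1) h i
      have : dAbs (p i) (v+1) ≤ dAbs (p i) v + 1 := by simp only [dAbs]; omega
      omega
    have l2 : Lf v ≤ Lf (v+1) + 1 := by
      have := hLle v h1 j
      have : dAbs (p j) v ≤ dAbs (p j) (v+1) + 1 := by simp only [dAbs]; omega
      omega
    have lne : Lf v ≠ Lf (v+1) := by
      have hadj : (pathG n).Adj ⟨v, h1⟩ ⟨v+1, h⟩ := Or.inl rfl
      have := hhom _ _ hadj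
      simpa [hLf, dif_pos h1, dif_pos h] using this
    omega
  -- local minima are sources
  have hmin : ∀ v, v < n → (v = 0 ∨ Lf v < Lf (v-1)) → (v+1 = n ∨ Lf v < Lf (v+1)) →
      ∃ i, p i = v ∧ Lf v = i.val + 1 := by
    intro v h h1 h2
    obtain ⟨i, hi⟩ := hLmem v h
    rcases Nat.lt_trichotomy (p i) v with hlt | heq | hgt
    · exfalso
      have hv1 : v - 1 < n := by omega
      have := hLle (v-1) hv1 i
      have hd : dAbs (p i) (v-1) + 1 = dAbs (p i) v := by simp only [dAbs]; omega
      rcases h1 with h1 | h1 <;> omega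
    · refine ⟨i, heq, ?_⟩
      have : dAbs (p i) v = 0 := by simp only [dAbs]; omega
      omega
    · exfalso
      have hv1 : v + 1 < n := by have := hpn i; omega
      have := hLle (v+1) hv1 i
      have hd : dAbs (p i) (v+1) + 1 = dAbs (p i) v := by simp only [dAbs]; omega
      rcases h2 with h2 | h2 <;> omega
  exact comb_bound n k hk Lf p hmin hstep hub

lemma part2 (k : ℕ) (hk : 1 ≤ k) :
    ∃ s : Fin k → Fin (k ^ 2 + k + 1), IsBurningSeq (pathG (k ^ 2 + k + 1)) s ∧
        (∀ v w : Fin (k ^ 2 + k + 1), (pathG (k ^ 2 + k + 1)).Adj v w →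
          burnTime (pathG (k ^ 2 + k + 1)) s v ≠ burnTime (pathG (k ^ 2 + k + 1)) s w) := by
  classical
  set n := k ^ 2 + k + 1 with hn
  have hq : ∀ i : Fin k, k + i.val * (2 * k - i.val) < n := by
    intro i
    have h1 : i.val < k := i.isLt
    have h2 : i.val ≤ 2 * k := by omega
    have : i.val * (2 * k - i.val) ≤ k * k := by
      zify [h2]
      nlinarith [sq_nonneg ((k : ℤ) - i.val)]
    have : k * k = k ^ 2 := by ring
    omega
  set s : Fin k → Fin n := fun i => ⟨k + i.val * (2 * k - i.val), hq i⟩ with hs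
  have hqmono : ∀ a b : ℕ, a < b → b < k →
      k + a * (2 * k - a) + (b - a) + 1 ≤ k + b * (2 * k - b) := by
    intro a b hab hbk
    have h2a : a ≤ 2 * k := by omega
    have h2b : b ≤ 2 * k := by omega
    zify [h2a, h2b, le_of_lt hab]
    nlinarith [mul_le_mul (by omega : (1:ℤ) ≤ (b:ℤ) - a) (by omega : (2:ℤ) ≤ 2*(k:ℤ) - a - b)
      (by omega) (by omega)]
  refine ⟨s, ⟨hk, ?_, ?_⟩, ?_⟩
  · -- condition (a)
    intro i j hij
    rw [pathG_edist]
    rw [Nat.cast_le]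
    have hij' : i.val < j.val := hij
    have := hqmono i.val j.val hij' j.isLt
    simp only [hs, dAbs]
    omega
  · -- coverage
    intro v
    have hv : v.val < n := v.isLt
    have hex : ∃ m, m < k ∧ v.val ≤ (m + 1) * (2 * k - m) := by
      refine ⟨k - 1, by omega, ?_⟩
      have h1 : (k - 1 + 1) = k := by omega
      have h2 : 2 * k - (k - 1) = k + 1 := by omega
      rw [h1, h2]
      have : k * (k + 1) = k ^ 2 + k := by ring
      omega
    set m := Nat.find hex with hm
    have hspec : m < k ∧ v.val ≤ (m + 1) * (2 * k - m) := Nat.find_spec hex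
    obtain ⟨hmk, hmv⟩ := hspec
    have hmfin : m < k := hmk
    refine ⟨⟨m, hmfin⟩, ?_⟩
    rw [pathG_edist, Nat.cast_le]
    -- need dAbs (q m) v ≤ k - m
    have hub2 : v.val ≤ (k + m * (2 * k - m)) + (k - m) := by
      have he : (m + 1) * (2 * k - m) = k + m * (2 * k - m) + (k - m) := by
        have h2m : m ≤ 2 * k := by omega
        zify [h2m, le_of_lt hmfin]
        try ring
      omega
    have hlb : (k + m * (2 * k - m)) ≤ v.val + (k - m) := by
      rcases Nat.eq_zero_or_pos m with h0 | h0
      · rw [h0]; simp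
      · have hnot : ¬ (m - 1 < k ∧ v.val ≤ (m - 1 + 1) * (2 * k - (m - 1))) :=
          Nat.find_min hex (by omega)
        have h3 : m - 1 + 1 = m := by omega
        rw [h3] at hnot
        have h4 : m * (2 * k - (m - 1)) < v.val := by
          rcases Nat.lt_or_ge ((m) * (2 * k - (m-1))) v.val with h | h
          · exact h
          · exact absurd ⟨by omega, h⟩ hnot
        have h5 : m * (2 * k - (m - 1)) = m * (2 * k - m) + m := by
          have h2m : m ≤ 2 * k := by omega
          have h2m1 : m - 1 ≤ 2 * k := by omega
          zify [h2m, h2m1, h0]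
          try ring_nf
          try omega
        omega
    simp only [hs, dAbs]
    omega
  · -- homomorphism via parity
    have hpar : ∀ v : Fin n, (burnTime (pathG n) s v) % 2 = (k + 1 + v.val) % 2 := by
      intro v
      rw [burnTime_eq hk s v]
      obtain ⟨i, _, hieq⟩ := Finset.exists_mem_eq_inf'
        (⟨⟨0, hk⟩, Finset.mem_univ _⟩ : (Finset.univ : Finset (Fin k)).Nonempty)
        (fun i => i.val + 1 + dAbs (s i).val v.val)
      rw [hieq]
      have hm : i.val * (2 * k - i.val) % 2 = i.val % 2 := by
        have h1 : (2 * k - i.val) % 2 = i.val % 2 := by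
          have : i.val ≤ 2 * k := by have := i.isLt; omega
          omega
        have h2 := Nat.mul_mod i.val (2 * k - i.val) 2
        rw [h1] at h2
        have h3 : i.val % 2 = 0 ∨ i.val % 2 = 1 := by omega
        rcases h3 with h3 | h3 <;> rw [h3] at h2 ⊢ <;> simpa using h2
      simp only [hs, dAbs]
      omega
    intro v w hadj
    have hv := hpar v
    have hw := hpar w
    intro heq
    rw [heq] at hv
    rcases hadj with h | h <;> omega

/-- Fix `k ≥ 1`. If the path graph `P_n` admits a burning sequence
with exactly `k` sources whose burning is a burning homomorphism, then
`n ≤ k² + k + 1`; moreover `P_{k² + k + 1}` admits such a burning sequence. -/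
theorem stmt_10 (k : ℕ) (hk : 1 ≤ k) :
    (∀ n : ℕ, (∃ s : Fin k → Fin n, IsBurningSeq (pathG n) s ∧
        (∀ v w : Fin n, (pathG n).Adj v w →
          burnTime (pathG n) s v ≠ burnTime (pathG n) s w)) →
      n ≤ k ^ 2 + k + 1) ∧
    (∃ s : Fin k → Fin (k ^ 2 + k + 1), IsBurningSeq (pathG (k ^ 2 + k + 1)) s ∧
        (∀ v w : Fin (k ^ 2 + k + 1), (pathG (k ^ 2 + k + 1)).Adj v w →
          burnTime (pathG (k ^ 2 + k + 1)) s v ≠ burnTime (pathG (k ^ 2 + k + 1)) s w)) := by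
  constructor
  · rintro n ⟨s, hb, hhom⟩
    exact part1 k n hk s hb hhom
  · exact part2 k hk
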